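/- arXiv:1704.03956 — 3 statements merged into one kernel-verified Lean document; each statement's English description precedes it below -/
import Mathlib

section
/- Let (X_{i,w})_{i≥1} and (X_{i,v})_{i≥1} be {0,1}-valued random variables such that whenever indices i, l, m are pairwise distinct, X_{i,w}, X_{l,v}, X_{m,v} are independent, with E[X_{i,w}] = μ_w and E[X_{i,v}] = μ_v for all i. Define Y_{j,v} = (1/j)∑_{l=1}^j X_{l,v}. Then for i ≤ j ≤ k, E[X_{i,w} · Y_{j,v} · Y_{k,v}] ≤ ((jk − 2j − k + 2)·μ_w·μ_v² + 2j + k − 2)/(jk). -/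
open MeasureTheory Finset

/-- Upper bound on the triple moment `E[X_{i,w} Y_{j,v} Y_{k,v}]`. -/
theorem stmt_4 {Ω : Type*} [MeasureSpace Ω] [IsProbabilityMeasure (volume : Measure Ω)]
    (Xw Xv : ℕ → Ω → ℝ) (μw μv : ℝ)
    (h01w : ∀ i ω, Xw i ω = 0 ∨ Xw i ω = 1)
    (h01v : ∀ i ω, Xv i ω = 0 ∨ Xv i ω = 1)
    (hmeanw : ∀ i, (∫ ω, Xw i ω) = μw)
    (hmeanv : ∀ i, (∫ ω, Xv i ω) = μv)
    (hint : ∀ i l m : ℕ, Integrable (fun ω => Xw i ω * (Xv l ω * Xv m ω)))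
    (hindep : ∀ i l m : ℕ, i ≠ l → l ≠ m → m ≠ i →
      (∫ ω, Xw i ω * (Xv l ω * Xv m ω)) = μw * μv ^ 2)
    (i j k : ℕ) (hi : 1 ≤ i) (hij : i ≤ j) (hjk : j ≤ k) :
    (∫ ω, Xw i ω * (((1 / (j : ℝ)) * ∑ l ∈ Finset.Icc 1 j, Xv l ω) *
        ((1 / (k : ℝ)) * ∑ m ∈ Finset.Icc 1 k, Xv m ω))) ≤
      (((j : ℝ) * k - 2 * j - k + 2) * μw * μv ^ 2 + 2 * j + k - 2) / ((j : ℝ) * k) := by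
  have hj : (1:ℕ) ≤ j := le_trans hi hij
  have hk : (1:ℕ) ≤ k := le_trans hj hjk
  have hj0 : (0:ℝ) < j := by exact_mod_cast hj
  have hk0 : (0:ℝ) < k := by exact_mod_cast hk
  set c := μw * μv ^ 2 with hc
  have hub : ∀ l m, (∫ ω, Xw i ω * (Xv l ω * Xv m ω)) ≤ 1 := by
    intro l m
    calc (∫ ω, Xw i ω * (Xv l ω * Xv m ω)) ≤ ∫ _ω, (1:ℝ) := by
          apply integral_mono (hint i l m) (integrable_const 1)
          intro ω
          rcases h01w i ω with h|h <;> rcases h01v l ω with h'|h' <;>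
            rcases h01v m ω with h''|h'' <;> simp [h, h', h'']
      _ = 1 := by simp
  -- pointwise rewrite of the integrand
  have hrw : ∀ ω, Xw i ω * (((1 / (j : ℝ)) * ∑ l ∈ Finset.Icc 1 j, Xv l ω) *
        ((1 / (k : ℝ)) * ∑ m ∈ Finset.Icc 1 k, Xv m ω))
      = (1/((j:ℝ)*k)) * ∑ l ∈ Finset.Icc 1 j, ∑ m ∈ Finset.Icc 1 k,
          Xw i ω * (Xv l ω * Xv m ω) := by
    intro ω
    rw [show Xw i ω * (((1 / (j : ℝ)) * ∑ l ∈ Finset.Icc 1 j, Xv l ω) *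
        ((1 / (k : ℝ)) * ∑ m ∈ Finset.Icc 1 k, Xv m ω))
      = (1/((j:ℝ)*k)) * (Xw i ω *
          ((∑ l ∈ Finset.Icc 1 j, Xv l ω) * (∑ m ∈ Finset.Icc 1 k, Xv m ω))) by ring]
    congr 1
    rw [Finset.sum_mul_sum, Finset.mul_sum]
    exact Finset.sum_congr rfl fun l _ => by rw [Finset.mul_sum]
  simp only [hrw]
  rw [integral_const_mul,
    integral_finset_sum _ (fun l _ => integrable_finset_sum _ (fun m _ => hint i l m))]
  simp only [fun l => integral_finset_sum (Finset.Icc 1 k)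
    (fun m (_ : m ∈ Finset.Icc 1 k) => hint i l m)]
  rw [one_div, inv_mul_eq_div]
  gcongr (?_ / _)
  -- bound each term
  calc (∑ l ∈ Finset.Icc 1 j, ∑ m ∈ Finset.Icc 1 k, ∫ ω, Xw i ω * (Xv l ω * Xv m ω))
      ≤ ∑ l ∈ Finset.Icc 1 j, ∑ m ∈ Finset.Icc 1 k,
          (if l ≠ i ∧ l ≠ m ∧ m ≠ i then c else 1) := by
        apply Finset.sum_le_sum; intro l _
        apply Finset.sum_le_sum; intro m _
        split_ifs with h
        · exact le_of_eq (hindep i l m (Ne.symm h.1) h.2.1 h.2.2)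
        · exact hub l m
    _ = ∑ l ∈ Finset.Icc 1 j, (if l = i then (k:ℝ) else ((k:ℝ)-2)*c + 2) := by
        apply Finset.sum_congr rfl
        intro l hl
        by_cases hli : l = i
        · simp [hli]
        · rw [if_neg hli]
          have hlk : l ∈ Finset.Icc 1 k := by
            simp only [Finset.mem_Icc] at hl ⊢; omega
          have hik : i ∈ Finset.Icc 1 k := by
            simp only [Finset.mem_Icc]; omega
          have hsub : ({l, i} : Finset ℕ) ⊆ Finset.Icc 1 k := by
            intro x hx
            simp only [Finset.mem_insert, Finset.mem_singleton] at hx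
            rcases hx with rfl|rfl <;> assumption
          have hk2 : 2 ≤ k := by
            simp only [Finset.mem_Icc] at hlk hik
            omega
          have hcard : ({l, i} : Finset ℕ).card = 2 := by
            rw [Finset.card_insert_of_notMem (by simpa using hli)]; simp
          rw [← Finset.sum_sdiff hsub]
          have hterm : ∀ m ∈ Finset.Icc 1 k \ ({l, i} : Finset ℕ),
              (if l ≠ i ∧ l ≠ m ∧ m ≠ i then c else 1) = c := by
            intro m hm
            simp only [Finset.mem_sdiff, Finset.mem_insert, Finset.mem_singleton,
              not_or] at hm
            exact if_pos ⟨hli, fun h => hm.2.1 h.symm, hm.2.2⟩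
          have h1 : ∑ m ∈ Finset.Icc 1 k \ ({l, i} : Finset ℕ),
              (if l ≠ i ∧ l ≠ m ∧ m ≠ i then c else 1) = ((k:ℝ)-2)*c := by
            rw [Finset.sum_congr rfl hterm, Finset.sum_const, nsmul_eq_mul,
              Finset.card_sdiff_of_subset hsub, hcard, Nat.card_Icc]
            have : k + 1 - 1 - 2 = k - 2 := by omega
            rw [this, Nat.cast_sub hk2]
            norm_num
          have h2 : ∑ m ∈ ({l, i} : Finset ℕ),
              (if l ≠ i ∧ l ≠ m ∧ m ≠ i then c else 1) = 2 := by
            rw [Finset.sum_insert (by simpa using hli)]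
            simp only [Finset.sum_singleton]
            rw [if_neg (by tauto), if_neg (by tauto)]
            norm_num
          rw [h1, h2]
    _ = ((j:ℝ)-1) * (((k:ℝ)-2)*c + 2) + (k:ℝ) := by
        have hij' : i ∈ Finset.Icc 1 j := by simp only [Finset.mem_Icc]; omega
        have hsub : ({i} : Finset ℕ) ⊆ Finset.Icc 1 j := by
          simpa using hij'
        rw [← Finset.sum_sdiff hsub]
        have hterm : ∀ l ∈ Finset.Icc 1 j \ ({i} : Finset ℕ),
            (if l = i then (k:ℝ) else ((k:ℝ)-2)*c + 2) = ((k:ℝ)-2)*c + 2 := by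
          intro l hl
          simp only [Finset.mem_sdiff, Finset.mem_singleton] at hl
          exact if_neg hl.2
        have h1 : ∑ l ∈ Finset.Icc 1 j \ ({i} : Finset ℕ),
            (if l = i then (k:ℝ) else ((k:ℝ)-2)*c + 2)
            = ((j:ℝ)-1) * (((k:ℝ)-2)*c + 2) := by
          rw [Finset.sum_congr rfl hterm, Finset.sum_const, nsmul_eq_mul,
            Finset.card_sdiff_of_subset hsub, Finset.card_singleton, Nat.card_Icc]
          have : k + 1 - 1 = k := by omega
          have hj1 : j + 1 - 1 - 1 = j - 1 := by omega
          rw [hj1, Nat.cast_sub hj]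
          norm_num
        rw [h1]
        simp
    _ = ((j : ℝ) * k - 2 * j - k + 2) * μw * μv ^ 2 + 2 * j + k - 2 := by
        rw [hc]; ring
end

section
/- Under the same hypotheses as the upper bound lemma ( {0,1}-valued random variables with triple-wise independence for pairwise distinct indices, means μ_w, μ_v ), for i ≤ j ≤ k one has the lower bound E[X_{i,w} · Y_{j,v} · Y_{k,v}] ≥ ((jk − 2j − k + 2)·μ_w·μ_v²)/(jk). -/
open MeasureTheory Finset

/-- Lower bound on the triple moment `E[X_{i,w} Y_{j,v} Y_{k,v}]`. -/
theorem stmt_5 {Ω : Type*} [MeasureSpace Ω] [IsProbabilityMeasure (volume : Measure Ω)]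
    (Xw Xv : ℕ → Ω → ℝ) (μw μv : ℝ)
    (h01w : ∀ i ω, Xw i ω = 0 ∨ Xw i ω = 1)
    (h01v : ∀ i ω, Xv i ω = 0 ∨ Xv i ω = 1)
    (hmeanw : ∀ i, (∫ ω, Xw i ω) = μw)
    (hmeanv : ∀ i, (∫ ω, Xv i ω) = μv)
    (hint : ∀ i l m : ℕ, Integrable (fun ω => Xw i ω * (Xv l ω * Xv m ω)))
    (hindep : ∀ i l m : ℕ, i ≠ l → l ≠ m → m ≠ i →
      (∫ ω, Xw i ω * (Xv l ω * Xv m ω)) = μw * μv ^ 2)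
    (i j k : ℕ) (hi : 1 ≤ i) (hij : i ≤ j) (hjk : j ≤ k) :
    (∫ ω, Xw i ω * (((1 / (j : ℝ)) * ∑ l ∈ Finset.Icc 1 j, Xv l ω) *
        ((1 / (k : ℝ)) * ∑ m ∈ Finset.Icc 1 k, Xv m ω))) ≥
      (((j : ℝ) * k - 2 * j - k + 2) * μw * μv ^ 2) / ((j : ℝ) * k) := by
  have hj1 : 1 ≤ j := le_trans hi hij
  have hk1 : 1 ≤ k := le_trans hj1 hjk
  have hjpos : (0:ℝ) < (j:ℝ) := by exact_mod_cast hj1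
  have hkpos : (0:ℝ) < (k:ℝ) := by exact_mod_cast hk1
  set c : ℝ := μw * μv ^ 2 with hc
  -- pointwise expansion
  have key : ∀ ω : Ω, Xw i ω * (((1 / (j : ℝ)) * ∑ l ∈ Finset.Icc 1 j, Xv l ω) *
        ((1 / (k : ℝ)) * ∑ m ∈ Finset.Icc 1 k, Xv m ω))
      = ((1/(j:ℝ)) * (1/(k:ℝ))) * ∑ l ∈ Finset.Icc 1 j, ∑ m ∈ Finset.Icc 1 k,
          Xw i ω * (Xv l ω * Xv m ω) := by
    intro ω
    have AB : (∑ l ∈ Finset.Icc 1 j, Xv l ω) * (∑ m ∈ Finset.Icc 1 k, Xv m ω)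
        = ∑ l ∈ Finset.Icc 1 j, ∑ m ∈ Finset.Icc 1 k, Xv l ω * Xv m ω :=
      Finset.sum_mul_sum _ _ _ _
    have pull : (∑ l ∈ Finset.Icc 1 j, ∑ m ∈ Finset.Icc 1 k, Xw i ω * (Xv l ω * Xv m ω))
        = Xw i ω * ∑ l ∈ Finset.Icc 1 j, ∑ m ∈ Finset.Icc 1 k, Xv l ω * Xv m ω := by
      simp only [← Finset.mul_sum]
    rw [pull, ← AB]
    ring
  have hint2 : ∀ l, Integrable (fun ω => ∑ m ∈ Finset.Icc 1 k, Xw i ω * (Xv l ω * Xv m ω)) :=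
    fun l => integrable_finset_sum _ (fun m _ => hint i l m)
  have h1 : (∫ ω, Xw i ω * (((1 / (j : ℝ)) * ∑ l ∈ Finset.Icc 1 j, Xv l ω) *
        ((1 / (k : ℝ)) * ∑ m ∈ Finset.Icc 1 k, Xv m ω)))
      = ((1/(j:ℝ)) * (1/(k:ℝ))) * ∑ l ∈ Finset.Icc 1 j, ∑ m ∈ Finset.Icc 1 k,
          (∫ ω, Xw i ω * (Xv l ω * Xv m ω)) := by
    simp only [key]
    rw [MeasureTheory.integral_const_mul,
      MeasureTheory.integral_finset_sum _ (fun l _ => hint2 l)]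
    refine congrArg _ (Finset.sum_congr rfl fun l _ => ?_)
    exact MeasureTheory.integral_finset_sum _ (fun m _ => hint i l m)
  -- termwise lower bound
  have hnn : ∀ l m : ℕ, 0 ≤ (∫ ω, Xw i ω * (Xv l ω * Xv m ω)) := by
    intro l m
    refine integral_nonneg fun ω => ?_
    have a1 : 0 ≤ Xw i ω := by rcases h01w i ω with h | h <;> simp [h]
    have a2 : 0 ≤ Xv l ω := by rcases h01v l ω with h | h <;> simp [h]
    have a3 : 0 ≤ Xv m ω := by rcases h01v m ω with h | h <;> simp [h]
    positivity
  have hterm : ∀ l ∈ Finset.Icc 1 j, ∀ m ∈ Finset.Icc 1 k,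
      (if l = i ∨ m = i ∨ m = l then 0 else c) ≤ (∫ ω, Xw i ω * (Xv l ω * Xv m ω)) := by
    intro l _ m _
    by_cases h : l = i ∨ m = i ∨ m = l
    · simpa [h] using hnn l m
    · push_neg at h
      obtain ⟨h1', h2', h3'⟩ := h
      rw [if_neg (by push_neg; exact ⟨h1', h2', h3'⟩)]
      rw [hindep i l m (fun e => h1' e.symm) (fun e => h3' e.symm) h2']
  -- compute the sum of lower bounds
  have hik : i ∈ Finset.Icc 1 k := Finset.mem_Icc.mpr ⟨hi, le_trans hij hjk⟩
  have hsum : ∑ l ∈ Finset.Icc 1 j, ∑ m ∈ Finset.Icc 1 k,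
      (if l = i ∨ m = i ∨ m = l then (0:ℝ) else c)
      = ((j:ℝ)*k - 2*j - k + 2) * c := by
    have hinner : ∀ l ∈ Finset.Icc 1 j,
        (∑ m ∈ Finset.Icc 1 k, (if l = i ∨ m = i ∨ m = l then (0:ℝ) else c))
        = if l = i then 0 else ((k:ℝ) - 2) * c := by
      intro l hl
      by_cases hli : l = i
      · simp [hli]
      · rw [if_neg hli]
        have hrw : ∀ m : ℕ, (if l = i ∨ m = i ∨ m = l then (0:ℝ) else c)
            = c - (if m ∈ ({i, l} : Finset ℕ) then c else 0) := by
          intro m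
          by_cases hm : m = i ∨ m = l
          · have : m ∈ ({i, l} : Finset ℕ) := by simp [hm]
            simp [this, hm, hli]
          · push_neg at hm
            have : m ∉ ({i, l} : Finset ℕ) := by simp [hm.1, hm.2]
            simp [this, hm.1, hm.2, hli]
        simp only [hrw]
        rw [Finset.sum_sub_distrib, Finset.sum_const, Finset.sum_ite_mem]
        have hsub : ({i, l} : Finset ℕ) ⊆ Finset.Icc 1 k := by
          intro x hx
          rcases Finset.mem_insert.mp hx with h | h
          · subst h; exact hik
          · rw [Finset.mem_singleton] at h; subst h
            rw [Finset.mem_Icc] at hl ⊢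
            exact ⟨hl.1, le_trans hl.2 hjk⟩
        rw [Finset.inter_eq_right.mpr hsub, Finset.sum_const]
        have hcard : ({i, l} : Finset ℕ).card = 2 := by
          rw [Finset.card_insert_of_notMem
            (Finset.notMem_singleton.mpr (fun e => hli e.symm)), Finset.card_singleton]
        rw [hcard, Nat.card_Icc]
        simp only [Nat.add_sub_cancel, nsmul_eq_mul]
        push_cast
        ring
    rw [Finset.sum_congr rfl hinner]
    have hrw2 : ∀ l : ℕ, (if l = i then (0:ℝ) else ((k:ℝ)-2)*c)
        = ((k:ℝ)-2)*c - (if l = i then ((k:ℝ)-2)*c else 0) := by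
      intro l; by_cases h : l = i <;> simp [h]
    simp only [hrw2]
    rw [Finset.sum_sub_distrib, Finset.sum_const, Finset.sum_ite_eq',
      if_pos (Finset.mem_Icc.mpr ⟨hi, hij⟩), Nat.card_Icc]
    simp only [Nat.add_sub_cancel, nsmul_eq_mul]
    push_cast
    ring
  have hbound : ((j:ℝ)*k - 2*j - k + 2) * c
      ≤ ∑ l ∈ Finset.Icc 1 j, ∑ m ∈ Finset.Icc 1 k, (∫ ω, Xw i ω * (Xv l ω * Xv m ω)) := by
    rw [← hsum]
    exact Finset.sum_le_sum fun l hl => Finset.sum_le_sum fun m hm => hterm l hl m hm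
  rw [h1, ge_iff_le]
  have hfinal : (((j:ℝ)*k - 2*j - k + 2) * μw * μv ^ 2) / ((j:ℝ)*k)
      = ((1/(j:ℝ)) * (1/(k:ℝ))) * (((j:ℝ)*k - 2*j - k + 2) * c) := by
    rw [hc]; field_simp
  rw [hfinal]
  exact mul_le_mul_of_nonneg_left hbound (by positivity)
end

section
/- With the hypotheses of the triple-moment bounds ({0,1}-valued, triple-wise independence for distinct indices, means μ_w, μ_v), for all 1 ≤ i ≤ n: E[X_{i,w}·(Y_{i,v} − Y_{n,v})²] ≤ (2μ_wμ_v² − 2)/i² + (−μ_wμ_v² − (4/n)μ_wμ_v² + 3)/i + (2μ_wμ_v² − 2)/n² + (μ_wμ_v² + 3)/n. -/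
open MeasureTheory Finset
set_option maxHeartbeats 1000000 in

theorem stmt_12 {Ω : Type*} [MeasureSpace Ω] [IsProbabilityMeasure (volume : Measure Ω)]
    (Xw Xv : ℕ → Ω → ℝ) (μw μv : ℝ)
    (h01w : ∀ i ω, Xw i ω = 0 ∨ Xw i ω = 1)
    (h01v : ∀ i ω, Xv i ω = 0 ∨ Xv i ω = 1)
    (hμw : μw ∈ Set.Icc (0 : ℝ) 1) (hμv : μv ∈ Set.Icc (0 : ℝ) 1)
    (hmeanw : ∀ i, (∫ ω, Xw i ω) = μw)
    (hmeanv : ∀ i, (∫ ω, Xv i ω) = μv)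
    (hint : ∀ i l m : ℕ, Integrable (fun ω => Xw i ω * (Xv l ω * Xv m ω)))
    (hindep : ∀ i l m : ℕ, i ≠ l → l ≠ m → m ≠ i →
      (∫ ω, Xw i ω * (Xv l ω * Xv m ω)) = μw * μv ^ 2)
    (Y : ℕ → Ω → ℝ) (hY : ∀ j ω, Y j ω = (1 / (j : ℝ)) * ∑ l ∈ Finset.Icc 1 j, Xv l ω)
    (i n : ℕ) (hi : 1 ≤ i) (hin : i ≤ n) :
    (∫ ω, Xw i ω * (Y i ω - Y n ω) ^ 2) ≤
      (2 * μw * μv ^ 2 - 2) / (i : ℝ) ^ 2 +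
      (-(μw * μv ^ 2) - (4 / (n : ℝ)) * μw * μv ^ 2 + 3) / (i : ℝ) +
      (2 * μw * μv ^ 2 - 2) / (n : ℝ) ^ 2 + (μw * μv ^ 2 + 3) / (n : ℝ) := by
  classical
  have hn1 : 1 ≤ n := hi.trans hin
  have hx1 : (1:ℝ) ≤ (i:ℝ) := by exact_mod_cast hi
  have hxy : (i:ℝ) ≤ (n:ℝ) := by exact_mod_cast hin
  have hx0 : (0:ℝ) < (i:ℝ) := by linarith
  have hy0 : (0:ℝ) < (n:ℝ) := by linarith
  have hne1 : (i:ℝ) ≠ 0 := ne_of_gt hx0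
  have hne2 : (n:ℝ) ≠ 0 := ne_of_gt hy0
  set a : ℝ := μw * μv ^ 2 with ha
  have ha0 : 0 ≤ a := mul_nonneg hμw.1 (pow_nonneg hμv.1 2)
  set d : ℝ := 1/(i:ℝ) - 1/(n:ℝ) with hd
  set e : ℝ := 1/(n:ℝ) with he
  have hd0 : 0 ≤ d := by
    have h := one_div_le_one_div_of_le hx0 hxy
    rw [hd]; linarith
  have he0 : 0 < e := by rw [he]; positivity
  set c : ℕ → ℝ := fun l => if l ≤ i then d else -e with hc
  have hcle : ∀ l, l ≤ i → c l = d := fun l h => by simp only [hc, if_pos h]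
  have hcgt : ∀ l, i < l → c l = -e := fun l h => by simp only [hc, if_neg (by omega : ¬ l ≤ i)]
  have hci : c i = d := hcle i le_rfl
  set S : Finset ℕ := Finset.Icc 1 n with hS
  have hiS : i ∈ S := Finset.mem_Icc.mpr ⟨hi, hin⟩
  have hdisj : Disjoint (Finset.Icc 1 i) (Finset.Ioc i n) := by
    rw [Finset.disjoint_left]
    intro x hx hx'
    simp only [Finset.mem_Icc, Finset.mem_Ioc] at hx hx'
    omega
  have hIoc : ∀ j : ℕ, Finset.Icc 1 j = Finset.Ioc 0 j := by
    intro j; ext x; simp only [Finset.mem_Icc, Finset.mem_Ioc]; omega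
  have hsum : ∀ f : ℕ → ℝ, ∑ l ∈ S, f l
      = ∑ l ∈ Finset.Icc 1 i, f l + ∑ l ∈ Finset.Ioc i n, f l := by
    intro f
    rw [hS, hIoc n, hIoc i]
    exact (Finset.sum_Ioc_consecutive _ (Nat.zero_le i) hin).symm
  have hcard1 : ((Finset.Icc 1 i).card : ℝ) = (i:ℝ) := by
    rw [Nat.card_Icc]; push_cast [Nat.add_sub_cancel]; ring
  have hcard2 : ((Finset.Ioc i n).card : ℝ) = (n:ℝ) - (i:ℝ) := by
    rw [Nat.card_Ioc]; push_cast [Nat.cast_sub hin]; ring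
  have hcsum : ∑ l ∈ S, c l = 0 := by
    rw [hsum c,
      Finset.sum_congr rfl (fun l hl => hcle l (Finset.mem_Icc.mp hl).2),
      Finset.sum_congr rfl (fun l hl => hcgt l (Finset.mem_Ioc.mp hl).1),
      Finset.sum_const, Finset.sum_const, nsmul_eq_mul, nsmul_eq_mul, hcard1, hcard2,
      hd, he]
    field_simp
    ring
  -- T and its bounds
  set T : ℕ → ℕ → ℝ := fun l m => ∫ ω, Xw i ω * (Xv l ω * Xv m ω) with hT
  have hT0 : ∀ l m, 0 ≤ T l m := by
    intro l m
    simp only [hT]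
    apply integral_nonneg
    intro ω
    rcases h01w i ω with h|h <;> rcases h01v l ω with h'|h' <;> rcases h01v m ω with h''|h'' <;>
      simp [h, h', h'']
  have hT1 : ∀ l m, T l m ≤ 1 := by
    intro l m
    simp only [hT]
    have h := integral_mono (hint i l m) (integrable_const 1)
      (fun ω => by
        rcases h01w i ω with h|h <;> rcases h01v l ω with h'|h' <;>
          rcases h01v m ω with h''|h'' <;> simp [h, h', h''])
    simpa using h
  have hTa : ∀ l m, l ≠ m → l ≠ i → m ≠ i → T l m = a := by
    intro l m h1 h2 h3
    simp only [hT, ha]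
    exact hindep i l m (Ne.symm h2) h1 h3
  -- rewrite integral
  have hYdiff : ∀ ω, Y i ω - Y n ω = ∑ l ∈ S, c l * Xv l ω := by
    intro ω
    have h1 : ∑ l ∈ Finset.Icc 1 i, c l * Xv l ω = d * ∑ l ∈ Finset.Icc 1 i, Xv l ω := by
      rw [Finset.mul_sum]
      exact Finset.sum_congr rfl fun l hl => by rw [hcle l (Finset.mem_Icc.mp hl).2]
    have h2 : ∑ l ∈ Finset.Ioc i n, c l * Xv l ω = -e * ∑ l ∈ Finset.Ioc i n, Xv l ω := by
      rw [Finset.mul_sum]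
      exact Finset.sum_congr rfl fun l hl => by rw [hcgt l (Finset.mem_Ioc.mp hl).1]
    have h3 : ∑ l ∈ Finset.Icc 1 n, Xv l ω
        = ∑ l ∈ Finset.Icc 1 i, Xv l ω + ∑ l ∈ Finset.Ioc i n, Xv l ω := by
      rw [← hS]; exact hsum _
    rw [hsum (fun l => c l * Xv l ω), h1, h2, hY i ω, hY n ω, h3, hd, he]
    ring
  have hfun : (fun ω => Xw i ω * (Y i ω - Y n ω)^2)
      = fun ω => ∑ l ∈ S, ∑ m ∈ S, (c l * c m) * (Xw i ω * (Xv l ω * Xv m ω)) := by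
    funext ω
    rw [hYdiff ω, sq, Finset.sum_mul_sum, Finset.mul_sum]
    refine Finset.sum_congr rfl fun l _ => ?_
    rw [Finset.mul_sum]
    exact Finset.sum_congr rfl fun m _ => by ring
  have key : (∫ ω, Xw i ω * (Y i ω - Y n ω) ^ 2) = ∑ l ∈ S, ∑ m ∈ S, c l * c m * T l m := by
    rw [hfun, integral_finset_sum _ (fun l _ =>
      integrable_finset_sum _ (fun m _ => (hint i l m).const_mul _))]
    refine Finset.sum_congr rfl fun l _ => ?_
    rw [integral_finset_sum _ (fun m _ => (hint i l m).const_mul _)]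
    exact Finset.sum_congr rfl fun m _ => by rw [integral_const_mul]
  -- row bounds
  have hrow1 : ∑ m ∈ S, c i * c m * T i m ≤ (i:ℝ) * d^2 := by
    calc ∑ m ∈ S, c i * c m * T i m ≤ ∑ m ∈ S, (if m ≤ i then d^2 else 0) := by
          apply Finset.sum_le_sum
          intro m _
          by_cases h : m ≤ i
          · rw [if_pos h, hci, hcle m h]
            nlinarith [hT1 i m, mul_nonneg hd0 hd0]
          · rw [if_neg h, hci, hcgt m (by omega)]
            nlinarith [mul_nonneg (mul_nonneg hd0 he0.le) (hT0 i m)]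
      _ = (i:ℝ) * d^2 := by
          rw [hsum,
            Finset.sum_congr rfl (fun m hm => if_pos (Finset.mem_Icc.mp hm).2),
            Finset.sum_congr rfl (fun m hm =>
              if_neg (by have := (Finset.mem_Ioc.mp hm).1; omega : ¬ m ≤ i)),
            Finset.sum_const, Finset.sum_const, nsmul_eq_mul, hcard1, smul_zero]
          ring
  have hsplitif : ∀ l ∈ S, ∀ (F G : ℕ → ℝ), l ≠ i →
      ∑ m ∈ S, (if m = l then F m else if m = i then G m else 0) = F l + G i := by
    intro l hlS F G hli
    have hptw : ∀ m, (if m = l then F m else if m = i then G m else 0)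
        = (if m = l then F m else 0) + (if m = i then G m else 0) := by
      intro m
      by_cases h1 : m = l
      · subst h1
        rw [if_pos rfl, if_pos rfl, if_neg (by omega), add_zero]
      · rw [if_neg h1, if_neg h1, zero_add]
    rw [Finset.sum_congr rfl (fun m _ => hptw m), Finset.sum_add_distrib,
      Finset.sum_ite_eq' S l F, Finset.sum_ite_eq' S i G, if_pos hlS, if_pos hiS]
  have hzsum : ∀ r : ℝ, ∑ m ∈ S, r * c m = 0 := by
    intro r
    rw [← Finset.mul_sum, hcsum, mul_zero]
  have hrow2 : ∀ l ∈ S, l ≠ i → l ≤ i → ∑ m ∈ S, c l * c m * T l m ≤ 2*d^2 - 2*a*d^2 := by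
    intro l hlS hli hle
    have hcl : c l = d := hcle l hle
    calc ∑ m ∈ S, c l * c m * T l m
        ≤ ∑ m ∈ S, ((if m = l then d^2 - a*d*(c m) else
            if m = i then d^2 - a*d*(c m) else 0) + a*d*(c m)) := by
          apply Finset.sum_le_sum
          intro m _
          by_cases h1 : m = l
          · subst h1
            rw [if_pos rfl, hcl]
            nlinarith [hT1 m m, mul_nonneg hd0 hd0]
          · rw [if_neg h1]
            by_cases h2 : m = i
            · subst h2
              rw [if_pos rfl, hcl, hci]
              nlinarith [hT1 l m, mul_nonneg hd0 hd0]
            · rw [if_neg h2, hTa l m (fun h => h1 h.symm) hli h2, hcl]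
              exact le_of_eq (by ring)
      _ = 2*d^2 - 2*a*d^2 := by
          rw [Finset.sum_add_distrib, hsplitif l hlS _ _ hli, hzsum, hcl, hci]
          ring
  have hrow3 : ∀ l ∈ S, i < l → ∑ m ∈ S, c l * c m * T l m ≤ e^2 + a*e*(d-e) := by
    intro l hlS hgt
    have hcl : c l = -e := hcgt l hgt
    have hli : l ≠ i := by omega
    calc ∑ m ∈ S, c l * c m * T l m
        ≤ ∑ m ∈ S, ((if m = l then e^2 - a*(-e)*(c m) else
            if m = i then -(a*(-e)*(c m)) else 0) + a*(-e)*(c m)) := by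
          apply Finset.sum_le_sum
          intro m _
          by_cases h1 : m = l
          · subst h1
            rw [if_pos rfl, hcl]
            nlinarith [hT1 m m, mul_nonneg he0.le he0.le]
          · rw [if_neg h1]
            by_cases h2 : m = i
            · subst h2
              rw [if_pos rfl, hcl, hci]
              nlinarith [mul_nonneg (mul_nonneg he0.le hd0) (hT0 l m)]
            · rw [if_neg h2, hTa l m (fun h => h1 h.symm) hli h2, hcl]
              exact le_of_eq (by ring)
      _ = e^2 + a*e*(d-e) := by
          rw [Finset.sum_add_distrib, hsplitif l hlS _ _ hli, hzsum, hcl, hci]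
          ring
  -- assemble
  have hmain : ∑ l ∈ S, ∑ m ∈ S, c l * c m * T l m
      ≤ ∑ l ∈ S, (if l = i then (i:ℝ)*d^2 else
          if l ≤ i then 2*d^2 - 2*a*d^2 else e^2 + a*e*(d-e)) := by
    apply Finset.sum_le_sum
    intro l hl
    by_cases h1 : l = i
    · rw [if_pos h1, h1]
      exact hrow1
    · rw [if_neg h1]
      by_cases h2 : l ≤ i
      · rw [if_pos h2]
        exact hrow2 l hl h1 h2
      · rw [if_neg h2]
        exact hrow3 l hl (by omega)
  have hRsum : ∑ l ∈ S, (if l = i then (i:ℝ)*d^2 else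
        if l ≤ i then 2*d^2 - 2*a*d^2 else e^2 + a*e*(d-e))
      = (i:ℝ)*(2*d^2 - 2*a*d^2) + ((n:ℝ)-(i:ℝ))*(e^2 + a*e*(d-e))
        + ((i:ℝ)*d^2 - (2*d^2 - 2*a*d^2)) := by
    have hptw : ∀ l, (if l = i then (i:ℝ)*d^2 else
          if l ≤ i then 2*d^2 - 2*a*d^2 else e^2 + a*e*(d-e))
        = (if l ≤ i then 2*d^2 - 2*a*d^2 else e^2 + a*e*(d-e))
          + (if l = i then (i:ℝ)*d^2 - (2*d^2 - 2*a*d^2) else 0) := by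
      intro l
      by_cases h1 : l = i
      · subst h1
        rw [if_pos rfl, if_pos rfl, if_pos le_rfl]
        ring
      · rw [if_neg h1, if_neg h1, add_zero]
    rw [Finset.sum_congr rfl (fun l _ => hptw l), Finset.sum_add_distrib,
      Finset.sum_ite_eq' S i, if_pos hiS, hsum,
      Finset.sum_congr rfl (fun m hm => if_pos (Finset.mem_Icc.mp hm).2),
      Finset.sum_congr rfl (fun m hm =>
        if_neg (by have := (Finset.mem_Ioc.mp hm).1; omega : ¬ m ≤ i)),
      Finset.sum_const, Finset.sum_const, nsmul_eq_mul, nsmul_eq_mul, hcard1, hcard2]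
  rw [key]
  refine le_trans (le_of_le_of_eq hmain hRsum) ?_
  rw [← sub_nonneg, hd, he, ha]
  rw [show
    (2 * μw * μv ^ 2 - 2) / (i:ℝ) ^ 2 + (-(μw * μv ^ 2) - 4 / (n:ℝ) * μw * μv ^ 2 + 3) / (i:ℝ)
        + (2 * μw * μv ^ 2 - 2) / (n:ℝ) ^ 2 + (μw * μv ^ 2 + 3) / (n:ℝ) -
      ((i:ℝ) * (2 * (1 / (i:ℝ) - 1 / (n:ℝ)) ^ 2 - 2 * (μw * μv ^ 2) * (1 / (i:ℝ) - 1 / (n:ℝ)) ^ 2) +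
          ((n:ℝ) - (i:ℝ)) * ((1 / (n:ℝ)) ^ 2 + μw * μv ^ 2 * (1 / (n:ℝ)) * (1 / (i:ℝ) - 1 / (n:ℝ) - 1 / (n:ℝ))) +
        ((i:ℝ) * (1 / (i:ℝ) - 1 / (n:ℝ)) ^ 2 - (2 * (1 / (i:ℝ) - 1 / (n:ℝ)) ^ 2 - 2 * (μw * μv ^ 2) * (1 / (i:ℝ) - 1 / (n:ℝ)) ^ 2)))
    = (8*(i:ℝ)^2*(n:ℝ) - 4*(i:ℝ)*(n:ℝ) - 2*(i:ℝ)^3)/((i:ℝ)^2*(n:ℝ)^2) from by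
      field_simp
      ring]
  apply div_nonneg _ (by positivity)
  nlinarith [mul_nonneg (mul_nonneg (sub_nonneg.mpr hx1) hx0.le) hy0.le,
    mul_nonneg (mul_nonneg (sub_nonneg.mpr hxy) hx0.le) hx0.le]
end
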